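/- For a connected graph G of order n ≥ 2, eqdim(G) = n − 1 if and only if G is the path of order 2. -/
import Mathlib


/-- `S` is a distance-equalizer set of `G`. -/
def IsDistEqSet {V : Type*} (G : SimpleGraph V) (S : Set V) : Prop :=
  ∀ u v : V, u ∉ S → v ∉ S → u ≠ v → ∃ x ∈ S, G.dist u x = G.dist v x

/-- The equidistant dimension of `G`. -/
noncomputable def eqdim {V : Type*} (G : SimpleGraph V) : ℕ :=
  sInf {k | ∃ S : Finset V, IsDistEqSet G ↑S ∧ S.card = k}

lemma three_distinct {V : Type*} [Fintype V] (h : Fintype.card V ≤ 2) {a b c : V}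
    (hab : a ≠ b) (hac : a ≠ c) (hbc : b ≠ c) : False := by
  classical
  have h3 : ({a, b, c} : Finset V).card = 3 := by
    rw [Finset.card_insert_of_notMem (by simp [hab, hac]),
        Finset.card_insert_of_notMem (by simp [hbc]), Finset.card_singleton]
  have := Finset.card_le_univ ({a, b, c} : Finset V)
  omega

/-- In a connected graph with at least 3 vertices there is a vertex with two
distinct neighbors. -/
lemma exists_cherry {V : Type*} [Fintype V] (G : SimpleGraph V) (hconn : G.Connected)
    (h3 : 3 ≤ Fintype.card V) :
    ∃ x y z : V, y ≠ z ∧ G.Adj x y ∧ G.Adj x z := by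
  classical
  -- first get an edge
  have hcard2 : 1 < Fintype.card V := by omega
  obtain ⟨a, b, hab⟩ := Fintype.exists_pair_of_one_lt_card hcard2
  obtain ⟨w⟩ := hconn a b
  have hedge : ∃ u v : V, G.Adj u v := by
    cases w with
    | nil => exact absurd rfl hab
    | cons h _ => exact ⟨_, _, h⟩
  obtain ⟨u, v, huv⟩ := hedge
  -- get a third vertex
  have : ((Finset.univ : Finset V) \ {u, v}).Nonempty := by
    rw [← Finset.card_pos, Finset.card_sdiff_of_subset (Finset.subset_univ _)]
    have := Finset.card_insert_le u ({v} : Finset V)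
    simp only [Finset.card_singleton, Finset.card_univ] at this ⊢
    omega
  obtain ⟨c, hc⟩ := this
  simp only [Finset.mem_sdiff, Finset.mem_univ, Finset.mem_insert, Finset.mem_singleton,
    true_and, not_or] at hc
  obtain ⟨hcu, hcv⟩ := hc
  obtain ⟨w'⟩ := hconn c v
  set p := w'.toPath with hp
  have hpath : (p : G.Walk c v).IsPath := p.2
  cases hq : (p : G.Walk c v) with
  | nil => exact absurd rfl hcv
  | @cons _ d _ h q =>
    cases q with
    | nil => exact ⟨v, c, u, hcu, h.symm, huv.symm⟩
    | @cons _ e _ h2 q2 =>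
      refine ⟨d, c, e, ?_, h.symm, h2⟩
      rw [hq] at hpath
      intro hce
      have hnd := hpath.support_nodup
      simp only [SimpleGraph.Walk.support_cons, List.nodup_cons] at hnd
      exact hnd.1 (by simp [hce, SimpleGraph.Walk.start_mem_support])

theorem stmt3 {V : Type*} [Fintype V] (G : SimpleGraph V)
    (hconn : G.Connected) (hn : 2 ≤ Fintype.card V) :
    eqdim G = Fintype.card V - 1 ↔ Nonempty (G ≃g (SimpleGraph.pathGraph 2)) := by
  classical
  constructor
  · intro heq
    by_cases h3 : 3 ≤ Fintype.card V
    · -- derive a contradiction: eqdim ≤ n - 2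
      exfalso
      obtain ⟨x, y, z, hyz, hxy, hxz⟩ := exists_cherry G hconn h3
      set S : Finset V := Finset.univ \ {y, z} with hS
      have hSdist : IsDistEqSet G ↑S := by
        intro u v hu hv huv
        simp only [hS, Finset.coe_sdiff, Finset.coe_univ, Set.mem_diff, Set.mem_univ,
          true_and, not_not, Finset.coe_insert, Finset.coe_singleton, Set.mem_insert_iff,
          Set.mem_singleton_iff] at hu hv
        refine ⟨x, ?_, ?_⟩
        · simp only [hS, Finset.coe_sdiff, Finset.coe_univ, Set.mem_diff, Set.mem_univ,
            true_and, Finset.coe_insert, Finset.coe_singleton, Set.mem_insert_iff,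
            Set.mem_singleton_iff]
          push_neg
          exact ⟨hxy.ne, hxz.ne⟩
        · have h1 : G.dist y x = 1 := SimpleGraph.dist_eq_one_iff_adj.mpr hxy.symm
          have h2 : G.dist z x = 1 := SimpleGraph.dist_eq_one_iff_adj.mpr hxz.symm
          rcases hu with rfl | rfl <;> rcases hv with rfl | rfl <;>
            first | exact absurd rfl huv | rw [h1, h2]
      have hScard : S.card = Fintype.card V - 2 := by
        rw [hS, Finset.card_sdiff_of_subset (Finset.subset_univ _), Finset.card_univ,
          Finset.card_insert_of_notMem (by simpa using hyz), Finset.card_singleton]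
      have hle : eqdim G ≤ Fintype.card V - 2 :=
        Nat.sInf_le ⟨S, hSdist, hScard⟩
      omega
    · -- card V = 2 : build the iso
      have h2 : Fintype.card V = 2 := by omega
      obtain ⟨a, b, hab⟩ := Fintype.exists_pair_of_one_lt_card (show 1 < Fintype.card V by omega)
      have hall : ∀ w : V, w = a ∨ w = b := by
        intro w
        by_contra hw
        push_neg at hw
        exact three_distinct (le_of_eq h2) hab hw.1.symm hw.2.symm
      have hadjab : G.Adj a b := by
        obtain ⟨w⟩ := hconn a b
        cases w with
        | nil => exact absurd rfl hab
        | @cons _ x _ h _ =>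
          rcases hall x with rfl | rfl
          · exact absurd rfl h.ne
          · exact h
      have hadj : ∀ u v : V, G.Adj u v ↔ u ≠ v := by
        intro u v
        constructor
        · exact SimpleGraph.Adj.ne
        · intro huv
          rcases hall u with rfl | rfl <;> rcases hall v with rfl | rfl <;>
            first | exact absurd rfl huv | exact hadjab | exact hadjab.symm
      have e : V ≃ Fin 2 := Fintype.equivFinOfCardEq h2
      refine ⟨⟨e, ?_⟩⟩
      intro u v
      have hpa : ∀ i j : Fin 2, (SimpleGraph.pathGraph 2).Adj i j ↔ i ≠ j := by
        intro i j
        rw [SimpleGraph.pathGraph_adj, Ne, Fin.ext_iff]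
        omega
      rw [hpa, hadj, not_iff_not]
      exact ⟨fun h => e.injective h, congrArg e⟩
  · rintro ⟨e⟩
    have h2 : Fintype.card V = 2 := by
      rw [Fintype.card_congr e.toEquiv]; simp
    rw [h2]
    -- eqdim G = 1
    obtain ⟨a⟩ : Nonempty V := Fintype.card_pos_iff.mp (by omega)
    have h1mem : 1 ∈ {k | ∃ S : Finset V, IsDistEqSet G ↑S ∧ S.card = k} := by
      refine ⟨{a}, ?_, Finset.card_singleton a⟩
      intro u v hu hv huv
      simp only [Finset.coe_singleton, Set.mem_singleton_iff] at hu hv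
      exact absurd (three_distinct (le_of_eq h2) huv hu hv) not_false
    have h0 : 0 ∉ {k | ∃ S : Finset V, IsDistEqSet G ↑S ∧ S.card = k} := by
      rintro ⟨S, hSd, hS0⟩
      rw [Finset.card_eq_zero] at hS0
      obtain ⟨u, v, huv⟩ := Fintype.exists_pair_of_one_lt_card (by omega : 1 < Fintype.card V)
      obtain ⟨x, hx, -⟩ := hSd u v (by simp [hS0]) (by simp [hS0]) huv
      simp [hS0] at hx
    have hle : eqdim G ≤ 1 := Nat.sInf_le h1mem
    have hne : eqdim G ≠ 0 := by
      intro h0'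
      rcases Nat.sInf_eq_zero.mp h0' with hmem | hemp
      · exact h0 hmem
      · rw [hemp] at h1mem; exact h1mem
    omega
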